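/- Let M_n(F) carry an elementary grading by a group G with neutral element ε, and let x_{1,g_1}⋯x_{n,g_n} be a multilinear monomial of total degree ε such that the n-tuple (g_1, g_1g_2, …, g_1⋯g_n) consists of pairwise distinct elements of G. If (E_{i_1,j_1},…,E_{i_n,j_n}) and (E_{k_1,l_1},…,E_{k_n,l_n}) are admissible substitutions by matrix units and neither product E_{i_1,j_1}⋯E_{i_n,j_n} nor E_{k_1,l_1}⋯E_{k_n,l_n} is zero, then there exists σ ∈ H with (E_{k_1,l_1},…,E_{k_n,l_n}) = (E_{σ(i_1),σ(j_1)},…,E_{σ(i_n),σ(j_n)}). -/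

import Mathlib

section Elementary

variable (F : Type*) [Field F] {G : Type*} [Group G] {n : ℕ}

/-- The homogeneous component of degree `x` of the elementary grading of `Mₙ(F)`
induced by the tuple `v`: it is spanned by the matrix units `E i j` with
`(v i)⁻¹ * v j = x`. -/
def elemComp (v : Fin n → G) (x : G) : Submodule F (Matrix (Fin n) (Fin n) F) where
  carrier := {M | ∀ i j, (v i)⁻¹ * v j ≠ x → M i j = 0}
  add_mem' := by
    intro M N hM hN i j h
    simp [Matrix.add_apply, hM i j h, hN i j h]
  zero_mem' := by intro i j _; simp
  smul_mem' := by
    intro c M hM i j h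
    simp [Matrix.smul_apply, hM i j h]

/-- The subgroup of permutations `σ` of `{1,…,n}` for which the automorphism `Λ_σ`
(which sends `E i j` to `E (σ i) (σ j)`) is a graded automorphism. -/
def GradedPerms (v : Fin n → G) : Subgroup (Equiv.Perm (Fin n)) where
  carrier := {σ | ∀ i j, (v (σ i))⁻¹ * v (σ j) = (v i)⁻¹ * v j}
  one_mem' := by intro i j; simp
  mul_mem' := by
    intro σ τ hσ hτ i j
    simpa [Equiv.Perm.mul_apply] using (hσ (τ i) (τ j)).trans (hτ i j)
  inv_mem' := by
    intro σ hσ i j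
    simpa using (hσ (σ⁻¹ i) (σ⁻¹ j)).symm

/-- The automorphism `Λ_σ` of the matrix algebra, determined by
`Λ_σ (E i j) = E (σ i) (σ j)`. -/
def permConj (σ : Equiv.Perm (Fin n)) (M : Matrix (Fin n) (Fin n) F) :
    Matrix (Fin n) (Fin n) F :=
  M.submatrix ⇑σ.symm ⇑σ.symm

end Elementary

theorem prod_stdBasis_aux {F : Type*} [Field F] {n : ℕ} (L : List (Fin n × Fin n))
    (hL : (L.map fun p => Matrix.single p.1 p.2 (1 : F)).prod ≠ 0) :
    L.Chain' (fun p q => p.2 = q.1) ∧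
    ∀ hne : L ≠ [], (L.map fun p => Matrix.single p.1 p.2 (1 : F)).prod
      = Matrix.single (L.head hne).1 (L.getLast hne).2 (1 : F) := by
  induction L with
  | nil => exact ⟨List.isChain_nil, fun h => absurd rfl h⟩
  | cons p L ih =>
    cases L with
    | nil => exact ⟨List.isChain_singleton p, fun _ => by simp⟩
    | cons q L' =>
      have hrest : ((q :: L').map fun p => Matrix.single p.1 p.2 (1 : F)).prod ≠ 0 := by
        intro h
        apply hL
        rw [List.map_cons, List.prod_cons, h, mul_zero]
      obtain ⟨hch, hprod⟩ := ih hrest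
      have hprod' := hprod (by simp)
      simp only [List.head_cons] at hprod'
      have hpq : p.2 = q.1 := by
        by_contra hne
        apply hL
        rw [List.map_cons, List.prod_cons, hprod',
          Matrix.single_mul_single_of_ne (h := hne)]
      refine ⟨List.isChain_cons_cons.mpr ⟨hpq, hch⟩, fun _ => ?_⟩
      rw [List.map_cons, List.prod_cons, hprod', hpq,
        Matrix.single_mul_single_same _ _ _ _, one_mul]
      simp [List.getLast_cons]

/-- Let `Mₙ(F)` carry an elementary grading induced by `v` and let
`x_{1,g₁} ⋯ x_{n,gₙ}` be a multilinear monomial of total degree `ε` whose partial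
degrees `g₁, g₁g₂, …, g₁⋯gₙ` are pairwise distinct.  If two admissible substitutions by
matrix units both have non-zero product, then the second substitution is obtained from
the first by applying `Λ_σ` for some `σ ∈ H`. -/
theorem admissible_unit_substitutions_related_by_graded_perm
    (F : Type*) [Field F] {G : Type*} [Group G] {n : ℕ} (v : Fin n → G)
    (gdeg : Fin n → G)
    (hdistinct : Function.Injective fun t : Fin n =>
      ((List.ofFn gdeg).take ((t : ℕ) + 1)).prod)
    (htotal : (List.ofFn gdeg).prod = 1)
    (i j k l : Fin n → Fin n)
    (hij : ∀ t, Matrix.single (i t) (j t) (1 : F) ∈ elemComp F v (gdeg t))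
    (hkl : ∀ t, Matrix.single (k t) (l t) (1 : F) ∈ elemComp F v (gdeg t))
    (hij0 : (List.ofFn fun t => Matrix.single (i t) (j t) (1 : F)).prod ≠ 0)
    (hkl0 : (List.ofFn fun t => Matrix.single (k t) (l t) (1 : F)).prod ≠ 0) :
    ∃ σ ∈ GradedPerms v, ∀ t, k t = σ (i t) ∧ l t = σ (j t) := by
  classical
  rcases Nat.eq_zero_or_pos n with hn | hn
  · exact ⟨1, one_mem _, fun t => absurd t.isLt (by omega)⟩
  -- degrees of the matrix units
  have hdeg : ∀ t, (v (i t))⁻¹ * v (j t) = gdeg t := by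
    intro t
    by_contra h
    have h2 : Matrix.single (i t) (j t) (1 : F) (i t) (j t) = 0 := hij t (i t) (j t) h
    simp [Matrix.single] at h2
  have hdeg' : ∀ t, (v (k t))⁻¹ * v (l t) = gdeg t := by
    intro t
    by_contra h
    have h2 : Matrix.single (k t) (l t) (1 : F) (k t) (l t) = 0 := hkl t (k t) (l t) h
    simp [Matrix.single] at h2
  -- chain conditions
  have hchain1 : ∀ (m : ℕ) (hm : m + 1 < n),
      j ⟨m, by omega⟩ = i ⟨m + 1, hm⟩ := by
    have := (prod_stdBasis_aux (List.ofFn fun t => (i t, j t))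
      (by simpa [List.map_ofFn, Function.comp_def] using hij0)).1
    replace this := List.isChain_ofFn.mp this
    exact fun m hm => this m hm
  have hchain2 : ∀ (m : ℕ) (hm : m + 1 < n),
      l ⟨m, by omega⟩ = k ⟨m + 1, hm⟩ := by
    have := (prod_stdBasis_aux (List.ofFn fun t => (k t, l t))
      (by simpa [List.map_ofFn, Function.comp_def] using hkl0)).1
    replace this := List.isChain_ofFn.mp this
    exact fun m hm => this m hm
  set d : Fin n → G := fun t => ((List.ofFn gdeg).take ((t : ℕ) + 1)).prod with hd_def
  have hdinj : Function.Injective d := hdistinct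
  have hdsucc : ∀ (m : ℕ) (hm : m + 1 < n),
      d ⟨m + 1, hm⟩ = d ⟨m, by omega⟩ * gdeg ⟨m + 1, hm⟩ := by
    intro m hm
    have hlen : m + 1 < (List.ofFn gdeg).length := by simpa using hm
    simp only [hd_def]
    rw [List.prod_take_succ _ (m + 1) hlen]
    congr 1
    simp
  -- key formulas
  have key1 : ∀ (m : ℕ) (hm : m < n),
      v (j ⟨m, hm⟩) = v (i ⟨0, hn⟩) * d ⟨m, hm⟩ := by
    intro m
    induction m with
    | zero =>
      intro hm
      have h0 := hdeg ⟨0, hm⟩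
      have hd0 : d ⟨0, hm⟩ = gdeg ⟨0, hm⟩ := by
        simp [hd_def, List.take_one]
      rw [hd0, ← h0, mul_inv_cancel_left]
    | succ m ihm =>
      intro hm
      have hm' : m < n := by omega
      calc v (j ⟨m + 1, hm⟩) = v (i ⟨m + 1, hm⟩) * gdeg ⟨m + 1, hm⟩ := by
            rw [← hdeg ⟨m + 1, hm⟩, mul_inv_cancel_left]
        _ = v (j ⟨m, hm'⟩) * gdeg ⟨m + 1, hm⟩ := by rw [hchain1 m hm]
        _ = v (i ⟨0, hn⟩) * (d ⟨m, hm'⟩ * gdeg ⟨m + 1, hm⟩) := by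
            rw [ihm hm', mul_assoc]
        _ = v (i ⟨0, hn⟩) * d ⟨m + 1, hm⟩ := by rw [hdsucc m hm]
  have key2 : ∀ (m : ℕ) (hm : m < n),
      v (l ⟨m, hm⟩) = v (k ⟨0, hn⟩) * d ⟨m, hm⟩ := by
    intro m
    induction m with
    | zero =>
      intro hm
      have h0 := hdeg' ⟨0, hm⟩
      have hd0 : d ⟨0, hm⟩ = gdeg ⟨0, hm⟩ := by
        simp [hd_def, List.take_one]
      rw [hd0, ← h0, mul_inv_cancel_left]
    | succ m ihm =>
      intro hm
      have hm' : m < n := by omega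
      calc v (l ⟨m + 1, hm⟩) = v (k ⟨m + 1, hm⟩) * gdeg ⟨m + 1, hm⟩ := by
            rw [← hdeg' ⟨m + 1, hm⟩, mul_inv_cancel_left]
        _ = v (l ⟨m, hm'⟩) * gdeg ⟨m + 1, hm⟩ := by rw [hchain2 m hm]
        _ = v (k ⟨0, hn⟩) * (d ⟨m, hm'⟩ * gdeg ⟨m + 1, hm⟩) := by
            rw [ihm hm', mul_assoc]
        _ = v (k ⟨0, hn⟩) * d ⟨m + 1, hm⟩ := by rw [hdsucc m hm]
  have key1' : ∀ t : Fin n, v (j t) = v (i ⟨0, hn⟩) * d t := fun t => key1 t.1 t.2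
  have key2' : ∀ t : Fin n, v (l t) = v (k ⟨0, hn⟩) * d t := fun t => key2 t.1 t.2
  -- injectivity
  have hjinj : Function.Injective j := by
    intro a b hab
    apply hdinj
    apply mul_left_cancel (a := v (i ⟨0, hn⟩))
    rw [← key1' a, ← key1' b, hab]
  have hlinj : Function.Injective l := by
    intro a b hab
    apply hdinj
    apply mul_left_cancel (a := v (k ⟨0, hn⟩))
    rw [← key2' a, ← key2' b, hab]
  set ej : Equiv.Perm (Fin n) := Equiv.ofBijective j (Finite.injective_iff_bijective.mp hjinj) with hej
  set el : Equiv.Perm (Fin n) := Equiv.ofBijective l (Finite.injective_iff_bijective.mp hlinj) with hel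
  have hej_apply : ∀ x, ej x = j x := fun x => rfl
  have hel_apply : ∀ x, el x = l x := fun x => rfl
  set last : Fin n := ⟨n - 1, by omega⟩ with hlast
  have hdlast : d last = 1 := by
    have h1 : (n - 1) + 1 = n := by omega
    simp only [hd_def, hlast, h1]
    rw [List.take_of_length_le (by simp)]
    exact htotal
  -- i 0 = j last
  have hi0 : i ⟨0, hn⟩ = j last := by
    have hs : j (ej.symm (i ⟨0, hn⟩)) = i ⟨0, hn⟩ := by
      rw [← hej_apply]; exact ej.apply_symm_apply _
    have : v (i ⟨0, hn⟩) * d (ej.symm (i ⟨0, hn⟩)) = v (i ⟨0, hn⟩) * d last := by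
      rw [← key1' _, hs, hdlast, mul_one]
    have := hdinj (mul_left_cancel this)
    rw [← hs, this]
  have hk0 : k ⟨0, hn⟩ = l last := by
    have hs : l (el.symm (k ⟨0, hn⟩)) = k ⟨0, hn⟩ := by
      rw [← hel_apply]; exact el.apply_symm_apply _
    have : v (k ⟨0, hn⟩) * d (el.symm (k ⟨0, hn⟩)) = v (k ⟨0, hn⟩) * d last := by
      rw [← key2' _, hs, hdlast, mul_one]
    have := hdinj (mul_left_cancel this)
    rw [← hs, this]
  set σ : Equiv.Perm (Fin n) := ej.symm.trans el with hσ
  have hσj : ∀ t, σ (j t) = l t := by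
    intro t
    show el (ej.symm (j t)) = l t
    rw [← hej_apply t, Equiv.symm_apply_apply]
    exact hel_apply t
  have hmem : σ ∈ GradedPerms v := by
    show ∀ a b, (v (σ a))⁻¹ * v (σ b) = (v a)⁻¹ * v b
    intro a b
    have ha : a = j (ej.symm a) := by rw [← hej_apply]; exact (ej.apply_symm_apply a).symm
    have hb : b = j (ej.symm b) := by rw [← hej_apply]; exact (ej.apply_symm_apply b).symm
    rw [ha, hb, hσj, hσj, key1' (ej.symm a), key1' (ej.symm b),
      key2' (ej.symm a), key2' (ej.symm b)]
    group
  refine ⟨σ, hmem, fun t => ?_⟩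
  refine ⟨?_, (hσj t).symm⟩
  rcases t with ⟨m, hm⟩
  cases m with
  | zero => rw [hi0, hσj, ← hk0]
  | succ m =>
    rw [← hchain1 m hm, hσj, hchain2 m hm]
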